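/- Let k be a positive natural number and let T : ℝ → EuclideanSpace ℝ (Fin k) be differentiable. Suppose that for every nonzero h ∈ EuclideanSpace ℝ (Fin k), the function x ↦ ⟪T x, h⟫ is not constant on ℝ. Then there exist points x₁, …, x_k ∈ ℝ such that the derivative vectors deriv T x₁, …, deriv T x_k are linearly independent over ℝ. -/

import Mathlib

open scoped RealInnerProductSpace

/-- Strong exponentiality yields linearly independent Jacobian columns: if
`T : ℝ → ℝᵏ` is differentiable and for every nonzero `h` the function
`x ↦ ⟪T x, h⟫` is not constant, then there exist `k` points at which the
derivative vectors of `T` are linearly independent. -/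
theorem exists_linearIndependent_deriv
    (k : ℕ) (hk : 0 < k) (T : ℝ → EuclideanSpace ℝ (Fin k))
    (hdiff : Differentiable ℝ T)
    (hnc : ∀ h : EuclideanSpace ℝ (Fin k), h ≠ 0 →
      ¬ ∃ c : ℝ, ∀ x : ℝ, ⟪T x, h⟫ = c) :
    ∃ x : Fin k → ℝ, LinearIndependent ℝ (fun i => deriv T (x i)) := by
  set S : Set (EuclideanSpace ℝ (Fin k)) := Set.range (deriv T) with hS
  have hspan : Submodule.span ℝ S = ⊤ := by
    by_contra hne
    have hbot : (Submodule.span ℝ S)ᗮ ≠ ⊥ := by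
      intro hb
      exact hne (by simpa [hb] using
        (Submodule.orthogonal_orthogonal (Submodule.span ℝ S)).symm)
    obtain ⟨h, hmem, hh0⟩ := Submodule.exists_mem_ne_zero_of_ne_bot hbot
    have hperp : ∀ x : ℝ, ⟪deriv T x, h⟫ = 0 := fun x =>
      (Submodule.mem_orthogonal _ h).1 hmem _
        (Submodule.subset_span ⟨x, rfl⟩)
    have hder : ∀ x : ℝ, HasDerivAt (fun x => ⟪T x, h⟫) (⟪deriv T x, h⟫) x := by
      intro x
      have := ((innerSL ℝ h).hasFDerivAt).comp_hasDerivAt x (hdiff x).hasDerivAt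
      have h1 : ⇑(innerSL ℝ h) ∘ T = fun y => ⟪T y, h⟫ := by
        funext y; simp [real_inner_comm, mul_comm]
      have h2 : (innerSL ℝ h) (deriv T x) = ⟪deriv T x, h⟫ := by
        simp [real_inner_comm, mul_comm]
      rw [h1, h2] at this
      exact this
    have hconst : ∀ x : ℝ, ⟪T x, h⟫ = ⟪T 0, h⟫ := by
      intro x
      exact is_const_of_deriv_eq_zero
        (fun y => (hder y).differentiableAt)
        (fun y => by rw [(hder y).deriv]; exact hperp y) x 0
    exact hnc h hh0 ⟨⟪T 0, h⟫, hconst⟩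
  obtain ⟨b, hbS, hbspan, hbli⟩ := exists_linearIndependent ℝ S
  rw [hspan] at hbspan
  have B : Module.Basis b ℝ (EuclideanSpace ℝ (Fin k)) := Module.Basis.mk hbli (by rw [Subtype.range_coe, hbspan])
  have e : b ≃ Fin k := B.indexEquiv (EuclideanSpace.basisFun (Fin k) ℝ).toBasis
  choose f hf using fun v : b => (hbS v.2 : ∃ x, deriv T x = (v : EuclideanSpace ℝ (Fin k)))
  refine ⟨fun i => f (e.symm i), ?_⟩
  have : (fun i : Fin k => deriv T (f (e.symm i))) = fun i => ((e.symm i : b) : EuclideanSpace ℝ (Fin k)) := by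
    funext i; exact hf _
  rw [this]
  exact hbli.comp e.symm e.symm.injective
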